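/- For every perfect (closed, nonempty, without isolated points) subset A of [0,1], the subspace A × {0,1} of the split interval S = [0,1] × {0,1} (lexicographic order topology) contains a homeomorphic copy of the split interval S' = S \ {(0,0),(1,1)}. -/

import Mathlib

open Filter Topology

open Set MeasureTheory

section SubspaceOrder

theorem generateOpen_of_pointwise {Y : Type*} (S : Set (Set Y)) (U : Set Y)
    (h : ∀ z ∈ U, ∃ V, TopologicalSpace.GenerateOpen S V ∧ z ∈ V ∧ V ⊆ U) :
    TopologicalSpace.GenerateOpen S U := by
  have hU : U = ⋃₀ {V | TopologicalSpace.GenerateOpen S V ∧ V ⊆ U} := by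
    ext z
    constructor
    · intro hz
      obtain ⟨V, h1, h2, h3⟩ := h z hz
      exact ⟨V, ⟨h1, h3⟩, h2⟩
    · rintro ⟨V, ⟨_, hVU⟩, hzV⟩
      exact hVU hzV
  rw [hU]
  exact .sUnion _ fun V hV => hV.1

theorem orderTopology_subtype_of {X : Type*} [LinearOrder X] [TopologicalSpace X] [OrderTopology X]
    (P : X → Prop)
    (hlow : ∀ z, P z → ∀ q, q < z →
      (∃ w, P w ∧ q ≤ w ∧ w < z) ∨ (∃ w, P w ∧ w < z ∧ ∀ v, P v → w < v → z ≤ v) ∨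
        (∀ v, P v → z ≤ v))
    (hhigh : ∀ z, P z → ∀ q, z < q →
      (∃ w, P w ∧ w ≤ q ∧ z < w) ∨ (∃ w, P w ∧ z < w ∧ ∀ v, P v → v < w → v ≤ z) ∨
        (∀ v, P v → v ≤ z)) :
    OrderTopology {x // P x} := by
  constructor
  have hX : (‹TopologicalSpace X› : TopologicalSpace X) =
      TopologicalSpace.generateFrom {s : Set X | ∃ a, s = Ioi a ∨ s = Iio a} :=
    ‹OrderTopology X›.topology_eq_generate_intervals
  have hsub : (instTopologicalSpaceSubtype : TopologicalSpace {x // P x}) =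
      TopologicalSpace.induced Subtype.val ‹TopologicalSpace X› := rfl
  rw [hsub, hX, induced_generateFrom_eq]
  apply le_antisymm
  · apply le_generateFrom
    rintro s ⟨a, rfl | rfl⟩
    · have : (Ioi a : Set {x // P x}) = Subtype.val ⁻¹' (Ioi a.val) := by
        ext v; simp [Subtype.coe_lt_coe]
      rw [this]
      exact TopologicalSpace.isOpen_generateFrom_of_mem ⟨Ioi a.val, ⟨a.val, Or.inl rfl⟩, rfl⟩
    · have : (Iio a : Set {x // P x}) = Subtype.val ⁻¹' (Iio a.val) := by
        ext v; simp [Subtype.coe_lt_coe]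
      rw [this]
      exact TopologicalSpace.isOpen_generateFrom_of_mem ⟨Iio a.val, ⟨a.val, Or.inr rfl⟩, rfl⟩
  · apply le_generateFrom
    rintro s ⟨r, ⟨q, rfl | rfl⟩, rfl⟩
    · show TopologicalSpace.GenerateOpen _ _
      apply generateOpen_of_pointwise
      intro z hz
      have hqz : q < z.val := hz
      rcases hlow z.val z.2 q hqz with ⟨w, Pw, hqw, hwz⟩ | ⟨w, Pw, hwz, hpred⟩ | hmin
      · refine ⟨Ioi ⟨w, Pw⟩, .basic _ ⟨⟨w, Pw⟩, Or.inl rfl⟩, hwz, ?_⟩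
        intro v hv
        exact lt_of_le_of_lt hqw (by exact_mod_cast hv)
      · refine ⟨Ioi ⟨w, Pw⟩, .basic _ ⟨⟨w, Pw⟩, Or.inl rfl⟩, hwz, ?_⟩
        intro v hv
        exact lt_of_lt_of_le hqz (hpred v.val v.2 (by exact_mod_cast hv))
      · refine ⟨univ, .univ, trivial, ?_⟩
        intro v _
        exact lt_of_lt_of_le hqz (hmin v.val v.2)
    · show TopologicalSpace.GenerateOpen _ _
      apply generateOpen_of_pointwise
      intro z hz
      have hqz : z.val < q := hz
      rcases hhigh z.val z.2 q hqz with ⟨w, Pw, hwq, hzw⟩ | ⟨w, Pw, hzw, hsucc⟩ | hmax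
      · refine ⟨Iio ⟨w, Pw⟩, .basic _ ⟨⟨w, Pw⟩, Or.inr rfl⟩, hzw, ?_⟩
        intro v hv
        exact lt_of_lt_of_le (by exact_mod_cast hv : v.val < w) hwq
      · refine ⟨Iio ⟨w, Pw⟩, .basic _ ⟨⟨w, Pw⟩, Or.inr rfl⟩, hzw, ?_⟩
        intro v hv
        exact lt_of_le_of_lt (hsucc v.val v.2 (by exact_mod_cast hv)) hqz
      · refine ⟨univ, .univ, trivial, ?_⟩
        intro v _
        exact lt_of_le_of_lt (hmax v.val v.2) hqz

end SubspaceOrder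

section MeasureConstruction

abbrev CantorGroup : Type := ℕ → Multiplicative (ZMod 2)

instance : MeasurableSpace (Multiplicative (ZMod 2)) := ⊤
instance : DiscreteMeasurableSpace (Multiplicative (ZMod 2)) := ⟨fun _ => trivial⟩
instance : BorelSpace (Multiplicative (ZMod 2)) := ⟨by rw [borel_eq_top_of_discrete]; rfl⟩
instance : BorelSpace CantorGroup := Pi.borelSpace

instance : (𝓝[≠] (1 : CantorGroup)).NeBot := by
  rw [← mem_closure_iff_nhdsWithin_neBot]
  rw [mem_closure_iff_nhds]
  intro U hU
  obtain ⟨V, hVU, hV, h1V⟩ := mem_nhds_iff.1 hU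
  obtain ⟨I, u, hu, hIV⟩ := isOpen_pi_iff.1 hV 1 h1V
  obtain ⟨n, hn⟩ := Infinite.exists_notMem_finset I
  refine ⟨Function.update 1 n (Multiplicative.ofAdd 1), ?_, ?_⟩
  · apply hVU
    apply hIV
    intro i hi
    rw [Function.update_of_ne (by rintro rfl; exact hn hi)]
    exact (hu i hi).2
  · simp only [mem_compl_iff, mem_singleton_iff]
    intro h
    have h2 : (Multiplicative.ofAdd (1 : ZMod 2)) = 1 := by
      simpa using congrFun h n
    exact absurd h2 (by decide)

theorem exists_nice_measure {A : Set ℝ} (hperf : Perfect A) (hne : A.Nonempty) :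
    ∃ (B : Set ℝ) (ν : Measure ℝ), B ⊆ A ∧ IsCompact B ∧ B.Nonempty ∧
      IsProbabilityMeasure ν ∧ (∀ x : ℝ, ν {x} = 0) ∧
      (∀ U : Set ℝ, IsOpen U → (U ∩ B).Nonempty → ν U ≠ 0) ∧ ν Bᶜ = 0 := by
  obtain ⟨f, hfA, hfc, hfi⟩ := hperf.exists_nat_bool_injection hne
  set e : CantorGroup → (ℕ → Bool) := fun σ n => decide (σ n = Multiplicative.ofAdd 1) with he
  have hec : Continuous e := by
    apply continuous_pi
    intro n
    exact (continuous_of_discreteTopology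
      (f := fun a : Multiplicative (ZMod 2) => decide (a = Multiplicative.ofAdd 1))).comp
      (continuous_apply n)
  have hei : Function.Injective e := by
    intro σ τ h
    funext n
    have h2 := congrFun h n
    simp only [he] at h2
    revert h2
    generalize σ n = a
    generalize τ n = b
    revert a b
    decide
  set h : CantorGroup → ℝ := f ∘ e with hh
  have hhc : Continuous h := hfc.comp hec
  have hhi : Function.Injective h := hfi.comp hei
  have hhm : Measurable h := hhc.measurable
  set B : Set ℝ := Set.range h with hB
  have hBA : B ⊆ A := by
    rintro x ⟨σ, rfl⟩
    exact hfA ⟨e σ, rfl⟩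
  have hBc : IsCompact B := isCompact_range hhc
  set K₀ : TopologicalSpace.PositiveCompacts CantorGroup :=
    ⟨⟨univ, isCompact_univ⟩, by rw [interior_univ]; exact univ_nonempty⟩ with hK₀
  set μ : Measure CantorGroup := Measure.haarMeasure K₀ with hμ
  haveI hμprob : IsProbabilityMeasure μ := ⟨by
    have h1 := Measure.haarMeasure_self (K₀ := K₀)
    rw [hμ]
    simpa [hK₀] using h1⟩
  haveI hμopen : μ.IsOpenPosMeasure := by rw [hμ]; infer_instance
  haveI hμatom : NoAtoms μ := by rw [hμ]; exact Measure.IsHaarMeasure.noAtoms _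
  set ν : Measure ℝ := Measure.map h μ with hν
  refine ⟨B, ν, hBA, hBc, ⟨h 1, ⟨1, rfl⟩⟩, ?_, ?_, ?_, ?_⟩
  · exact Measure.isProbabilityMeasure_map hhm.aemeasurable
  · intro x
    rw [hν, Measure.map_apply hhm (measurableSet_singleton x)]
    have hsub : (h ⁻¹' {x}).Subsingleton := fun a ha b hb => hhi (ha.trans hb.symm)
    exact hsub.countable.measure_zero μ
  · rintro U hU ⟨x, hxU, σ, hσ⟩
    rw [hν, Measure.map_apply hhm hU.measurableSet]
    exact (hU.preimage hhc).measure_ne_zero μ ⟨σ, by rw [mem_preimage, hσ]; exact hxU⟩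
  · rw [hν, Measure.map_apply hhm hBc.isClosed.measurableSet.compl]
    have : h ⁻¹' Bᶜ = ∅ := by
      ext σ
      simp [hB]
    rw [this]
    exact measure_empty

end MeasureConstruction

section Phi

noncomputable def phi (ν : Measure ℝ) (x : ℝ) : ℝ := (ν (Iic x)).toReal

variable {ν : Measure ℝ} [IsProbabilityMeasure ν] {B : Set ℝ}

theorem phi_mono : Monotone (phi ν) := fun x y hxy =>
  ENNReal.toReal_mono (measure_ne_top ν _) (measure_mono (Iic_subset_Iic.2 hxy))

theorem phi_nonneg (x : ℝ) : 0 ≤ phi ν x := ENNReal.toReal_nonneg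

theorem phi_le_one (x : ℝ) : phi ν x ≤ 1 := by
  have h := ENNReal.toReal_mono (measure_ne_top ν univ) (measure_mono (subset_univ (Iic x)))
  rwa [measure_univ, ENNReal.toReal_one] at h

theorem phi_split {x y : ℝ} (hxy : x ≤ y) :
    phi ν y = phi ν x + (ν (Ioc x y)).toReal := by
  rw [phi, phi, ← ENNReal.toReal_add (measure_ne_top ν _) (measure_ne_top ν _),
    ← measure_union (Iic_disjoint_Ioc le_rfl) measurableSet_Ioc, Iic_union_Ioc_eq_Iic hxy]

theorem phi_lt (hopen : ∀ U : Set ℝ, IsOpen U → (U ∩ B).Nonempty → ν U ≠ 0)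
    {x y : ℝ} (hxy : x < y) (hne2 : (Ioo x y ∩ B).Nonempty) : phi ν x < phi ν y := by
  rw [phi_split hxy.le]
  have h1 : ν (Ioo x y) ≠ 0 := hopen _ isOpen_Ioo hne2
  have h2 : 0 < ν (Ioc x y) := lt_of_lt_of_le (pos_iff_ne_zero.2 h1) (measure_mono Ioo_subset_Ioc_self)
  have h3 : 0 < (ν (Ioc x y)).toReal := ENNReal.toReal_pos h2.ne' (measure_ne_top ν _)
  linarith

theorem phi_eq (hatom : ∀ x : ℝ, ν {x} = 0) (hnull : ν Bᶜ = 0)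
    {x y : ℝ} (hxy : x < y) (hempty : Ioo x y ∩ B = ∅) : phi ν x = phi ν y := by
  rw [phi_split hxy.le]
  have h1 : ν (Ioc x y) = 0 := by
    apply le_antisymm _ (zero_le)
    have hsub : Ioc x y ⊆ Bᶜ ∪ {y} := by
      intro v ⟨hv1, hv2⟩
      rcases eq_or_lt_of_le hv2 with h | h
      · exact Or.inr (by simp [h])
      · left
        intro hvB
        have hmem : v ∈ Ioo x y ∩ B := ⟨⟨hv1, h⟩, hvB⟩
        rw [hempty] at hmem
        exact hmem
    calc ν (Ioc x y) ≤ ν (Bᶜ ∪ {y}) := measure_mono hsub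
      _ ≤ ν Bᶜ + ν {y} := measure_union_le _ _
      _ = 0 := by rw [hnull, hatom, add_zero]
  rw [h1]
  simp

theorem phi_sInf (hBc : IsCompact B) (hBne : B.Nonempty)
    (hatom : ∀ x : ℝ, ν {x} = 0) (hnull : ν Bᶜ = 0) : phi ν (sInf B) = 0 := by
  have h1 : ν (Iic (sInf B)) = 0 := by
    apply le_antisymm _ (zero_le)
    have hsub : Iic (sInf B) ⊆ Bᶜ ∪ {sInf B} := by
      intro v hv
      by_cases hvB : v ∈ B
      · right
        have := csInf_le hBc.bddBelow hvB
        simp [le_antisymm (hv : v ≤ sInf B) this]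
      · exact Or.inl hvB
    calc ν (Iic (sInf B)) ≤ ν (Bᶜ ∪ {sInf B}) := measure_mono hsub
      _ ≤ ν Bᶜ + ν {sInf B} := measure_union_le _ _
      _ = 0 := by rw [hnull, hatom, add_zero]
  rw [phi, h1]
  simp

theorem phi_sSup (hBc : IsCompact B) (hBne : B.Nonempty) (hnull : ν Bᶜ = 0) :
    phi ν (sSup B) = 1 := by
  have h2 : ν (Ioi (sSup B)) = 0 := by
    apply measure_mono_null _ hnull
    intro v hv hvB
    exact absurd (le_csSup hBc.bddAbove hvB) (not_le.2 hv)
  have h1 : ν (Iic (sSup B)) = 1 := by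
    have := measure_union_le (μ := ν) (Iic (sSup B)) (Ioi (sSup B))
    rw [Iic_union_Ioi, measure_univ, h2, add_zero] at this
    exact le_antisymm prob_le_one this
  rw [phi, h1, ENNReal.toReal_one]

theorem phi_cont (hatom : ∀ x : ℝ, ν {x} = 0) : Continuous (phi ν) := by
  rw [continuous_iff_continuousAt]
  intro x
  rw [ContinuousAt, tendsto_order]
  constructor
  · intro a ha
    have hunion : (⋃ n : ℕ, Iic (x - 1/(n+1))) = Iio x := by
      ext y
      simp only [mem_iUnion, mem_Iic, mem_Iio]
      constructor
      · rintro ⟨n, hn⟩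
        have h0 : (0:ℝ) < 1/((n:ℝ)+1) := by positivity
        linarith
      · intro hy
        obtain ⟨n, hn⟩ := exists_nat_one_div_lt (show (0:ℝ) < x - y by linarith)
        exact ⟨n, by linarith⟩
    have hmon : Monotone (fun n : ℕ => Iic (x - 1/((n:ℝ)+1))) := by
      intro i j hij
      apply Iic_subset_Iic.2
      have h1 : (1:ℝ)/((j:ℝ)+1) ≤ 1/((i:ℝ)+1) := by
        apply one_div_le_one_div_of_le (by positivity)
        have := (Nat.cast_le (α := ℝ)).2 hij
        linarith
      linarith
    have hlim := tendsto_measure_iUnion_atTop (μ := ν) hmon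
    rw [hunion] at hlim
    have hiio : ν (Iio x) = ν (Iic x) := by
      apply le_antisymm (measure_mono Iio_subset_Iic_self)
      calc ν (Iic x) ≤ ν (Iio x ∪ {x}) := by
            apply measure_mono
            intro y hy
            rcases lt_or_eq_of_le (mem_Iic.1 hy) with h | h
            · exact Or.inl h
            · exact Or.inr (by simp [h])
        _ ≤ ν (Iio x) + ν {x} := measure_union_le _ _
        _ = ν (Iio x) := by rw [hatom, add_zero]
    rw [hiio] at hlim
    have hlim2 : Tendsto (fun n : ℕ => phi ν (x - 1/((n:ℝ)+1))) atTop (𝓝 (phi ν x)) :=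
      (ENNReal.tendsto_toReal (measure_ne_top ν _)).comp hlim
    obtain ⟨n, hn⟩ := (hlim2.eventually (eventually_gt_nhds ha)).exists
    filter_upwards [Ioi_mem_nhds (show x - 1/((n:ℝ)+1) < x by
      have h0 : (0:ℝ) < 1/((n:ℝ)+1) := by positivity
      linarith)] with y hy
    exact lt_of_lt_of_le hn (phi_mono (le_of_lt hy))
  · intro b hb
    have hinter : (⋂ n : ℕ, Iic (x + 1/((n:ℝ)+1))) = Iic x := by
      ext y
      simp only [mem_iInter, mem_Iic]
      constructor
      · intro hy
        by_contra hxy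
        push_neg at hxy
        obtain ⟨n, hn⟩ := exists_nat_one_div_lt (show (0:ℝ) < y - x by linarith)
        have := hy n
        linarith
      · intro hy n
        have h0 : (0:ℝ) < 1/((n:ℝ)+1) := by positivity
        linarith
    have hant : Antitone (fun n : ℕ => Iic (x + 1/((n:ℝ)+1))) := by
      intro i j hij
      apply Iic_subset_Iic.2
      have h1 : (1:ℝ)/((j:ℝ)+1) ≤ 1/((i:ℝ)+1) := by
        apply one_div_le_one_div_of_le (by positivity)
        have := (Nat.cast_le (α := ℝ)).2 hij
        linarith
      linarith
    have hlim := tendsto_measure_iInter_atTop (μ := ν)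
      (fun n => measurableSet_Iic.nullMeasurableSet) hant ⟨0, measure_ne_top ν _⟩
    rw [hinter] at hlim
    have hlim2 : Tendsto (fun n : ℕ => phi ν (x + 1/((n:ℝ)+1))) atTop (𝓝 (phi ν x)) :=
      (ENNReal.tendsto_toReal (measure_ne_top ν _)).comp hlim
    obtain ⟨n, hn⟩ := (hlim2.eventually (eventually_lt_nhds hb)).exists
    filter_upwards [Iio_mem_nhds (show x < x + 1/((n:ℝ)+1) by
      have h0 : (0:ℝ) < 1/((n:ℝ)+1) := by positivity
      linarith)] with y hy
    exact lt_of_le_of_lt (phi_mono (le_of_lt hy)) hn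

theorem phi_surj (hBc : IsCompact B) (hBne : B.Nonempty)
    (hatom : ∀ x : ℝ, ν {x} = 0) (hnull : ν Bᶜ = 0)
    {t : ℝ} (ht : t ∈ Icc (0:ℝ) 1) : ∃ x ∈ B, phi ν x = t := by
  have hmM : sInf B ≤ sSup B := csInf_le_csSup hBne hBc.bddBelow hBc.bddAbove
  have hIVT := intermediate_value_Icc hmM (phi_cont (ν := ν) hatom).continuousOn
  rw [phi_sInf hBc hBne hatom hnull, phi_sSup hBc hBne hnull] at hIVT
  obtain ⟨c, hc, hct⟩ := hIVT ht
  set x := sSup (B ∩ Iic c) with hx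
  have hne2 : (B ∩ Iic c).Nonempty := ⟨sInf B, hBc.isClosed.csInf_mem hBne hBc.bddBelow, hc.1⟩
  have hbdd : BddAbove (B ∩ Iic c) := hBc.bddAbove.mono inter_subset_left
  have hxmem : x ∈ B ∩ Iic c :=
    (hBc.isClosed.inter isClosed_Iic).csSup_mem hne2 hbdd
  refine ⟨x, hxmem.1, ?_⟩
  rcases eq_or_lt_of_le (mem_Iic.1 hxmem.2) with h | h
  · rw [h, hct]
  · rw [← hct]
    apply phi_eq hatom hnull h
    ext y
    simp only [mem_inter_iff, mem_Ioo, mem_empty_iff_false, iff_false, not_and]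
    rintro ⟨hy1, hy2⟩ hyB
    exact absurd (le_csSup hbdd ⟨hyB, hy2.le⟩) (not_le.2 hy1)

end Phi

/-- The double arrow space `S = [0,1] × {0,1}` with the order topology induced by the
lexicographic order. -/
def DoubleArrow : Type := ↥(Set.Icc (0 : ℝ) 1) ×ₗ Bool

noncomputable instance : LinearOrder DoubleArrow :=
  inferInstanceAs (LinearOrder (↥(Set.Icc (0 : ℝ) 1) ×ₗ Bool))

noncomputable instance : TopologicalSpace DoubleArrow := Preorder.topology DoubleArrow

/-- The split interval `S' = S \ {(0,0), (1,1)}` (with the subspace topology, which is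
its order topology). -/
abbrev SplitInterval : Type :=
  {p : DoubleArrow //
    p ≠ toLex (⟨(0 : ℝ), by norm_num⟩, false) ∧ p ≠ toLex (⟨(1 : ℝ), by norm_num⟩, true)}

instance : OrderTopology DoubleArrow := ⟨rfl⟩

namespace DAhelp

abbrev I01 : Type := ↥(Set.Icc (0 : ℝ) 1)

theorem da_lt_iff {p q : DoubleArrow} :
    p < q ↔ ((ofLex p).1 < (ofLex q).1 ∨ ((ofLex p).1 = (ofLex q).1 ∧ (ofLex p).2 < (ofLex q).2)) :=
  by exact Prod.Lex.lt_iff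

theorem da_le_iff {p q : DoubleArrow} :
    p ≤ q ↔ ((ofLex p).1 < (ofLex q).1 ∨ ((ofLex p).1 = (ofLex q).1 ∧ (ofLex p).2 ≤ (ofLex q).2)) :=
  by exact Prod.Lex.le_iff

theorem da_eq_iff {p q : DoubleArrow} :
    p = q ↔ (((ofLex p).1 : ℝ) = ((ofLex q).1 : ℝ) ∧ (ofLex p).2 = (ofLex q).2) := by
  constructor
  · rintro rfl
    exact ⟨rfl, rfl⟩
  · rintro ⟨h1, h2⟩
    have : ofLex p = ofLex q := Prod.ext (Subtype.ext h1) h2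
    exact congrArg toLex this

theorem da_rep (p : DoubleArrow) : p = toLex ((ofLex p).1, (ofLex p).2) := rfl

/-- first coordinate of a lex pair -/
@[simp] theorem ofLex_fst (x : I01) (b : Bool) :
    (ofLex (toLex (x, b) : DoubleArrow)).1 = x := rfl

@[simp] theorem ofLex_snd (x : I01) (b : Bool) :
    (ofLex (toLex (x, b) : DoubleArrow)).2 = b := rfl

theorem splitInterval_orderTopology : OrderTopology SplitInterval := by
  apply orderTopology_subtype_of
  · -- lower condition
    rintro z ⟨hz0, hz1⟩ q hqz
    cases hb : (ofLex z).2 with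
    | true =>
      by_cases hx0 : ((ofLex z).1 : ℝ) = 0
      · -- z is the minimum
        right; right
        rintro v ⟨hv0, _⟩
        by_contra hlt
        rcases da_lt_iff.1 (not_le.1 hlt) with h | ⟨h1, h2⟩
        · have := ((ofLex v).1).2.1
          have hcast : ((ofLex v).1 : ℝ) < ((ofLex z).1 : ℝ) := h
          rw [hx0] at hcast
          linarith
        · rw [hb, Bool.lt_iff] at h2
          refine hv0 (da_eq_iff.2 ⟨?_, h2.1⟩)
          rw [Subtype.ext_iff] at h1
          simpa [hx0] using h1
      · -- predecessor (x, false)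
        right; left
        refine ⟨toLex ((ofLex z).1, false), ⟨?_, ?_⟩, ?_, ?_⟩
        · intro h
          rcases da_eq_iff.1 h with ⟨h1, -⟩
          exact hx0 (by simpa using h1)
        · intro h
          rcases da_eq_iff.1 h with ⟨-, h2⟩
          simp at h2
        · exact da_lt_iff.2 (Or.inr ⟨rfl, by simp [hb, Bool.lt_iff]⟩)
        · rintro v ⟨hv0, -⟩ hwv
          rcases da_lt_iff.1 hwv with h | ⟨h1, h2⟩
          · exact le_of_lt (da_lt_iff.2 (Or.inl (by simpa using h)))
          · apply le_of_eq
            apply da_eq_iff.2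
            simp only [ofLex_fst, ofLex_snd] at h1 h2
            rw [Bool.lt_iff] at h2
            constructor
            · rw [Subtype.ext_iff] at h1
              rw [← h1]
            · rw [hb, h2.2]
    | false =>
      -- z = (x, false), x ≠ 0; limit from below
      left
      have hx0 : ((ofLex z).1 : ℝ) ≠ 0 := by
        intro h
        refine hz0 (da_eq_iff.2 ⟨by simpa using h, by simpa using hb⟩)
      have hxpos : 0 < ((ofLex z).1 : ℝ) := lt_of_le_of_ne ((ofLex z).1).2.1 (Ne.symm hx0)
      have hq1 : (ofLex q).1 < (ofLex z).1 := by
        rcases da_lt_iff.1 hqz with h | ⟨h1, h2⟩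
        · exact h
        · rw [hb, Bool.lt_iff] at h2
          exact absurd h2.2 (by simp)
      obtain ⟨y, hy1, hy2⟩ := exists_between (show ((ofLex q).1 : ℝ) < ((ofLex z).1 : ℝ) from hq1)
      have hyI : y ∈ Set.Icc (0:ℝ) 1 := ⟨le_trans ((ofLex q).1).2.1 hy1.le,
        le_trans hy2.le ((ofLex z).1).2.2⟩
      refine ⟨toLex (⟨y, hyI⟩, true), ⟨?_, ?_⟩, ?_, ?_⟩
      · intro h
        rcases da_eq_iff.1 h with ⟨-, h2⟩
        simp at h2
      · intro h
        rcases da_eq_iff.1 h with ⟨h1, -⟩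
        simp only [ofLex_fst] at h1
        have : y < 1 := lt_of_lt_of_le hy2 ((ofLex z).1).2.2
        rw [h1] at this
        exact absurd this (by norm_num)
      · exact le_of_lt (da_lt_iff.2 (Or.inl (by exact hy1)))
      · exact da_lt_iff.2 (Or.inl (by exact hy2))
  · -- upper condition
    rintro z ⟨hz0, hz1⟩ q hqz
    cases hb : (ofLex z).2 with
    | false =>
      by_cases hx1 : ((ofLex z).1 : ℝ) = 1
      · right; right
        rintro v ⟨-, hv1⟩
        by_contra hlt
        rcases da_lt_iff.1 (not_le.1 hlt) with h | ⟨h1, h2⟩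
        · have := ((ofLex v).1).2.2
          have hcast : ((ofLex z).1 : ℝ) < ((ofLex v).1 : ℝ) := h
          rw [hx1] at hcast
          linarith
        · rw [hb, Bool.lt_iff] at h2
          refine hv1 (da_eq_iff.2 ⟨?_, h2.2⟩)
          rw [Subtype.ext_iff] at h1
          simpa [hx1] using h1.symm
      · right; left
        refine ⟨toLex ((ofLex z).1, true), ⟨?_, ?_⟩, ?_, ?_⟩
        · intro h
          rcases da_eq_iff.1 h with ⟨-, h2⟩
          simp at h2
        · intro h
          rcases da_eq_iff.1 h with ⟨h1, -⟩
          exact hx1 (by simpa using h1)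
        · exact da_lt_iff.2 (Or.inr ⟨rfl, by simp [hb, Bool.lt_iff]⟩)
        · rintro v ⟨hv0, -⟩ hwv
          rcases da_lt_iff.1 hwv with h | ⟨h1, h2⟩
          · exact le_of_lt (da_lt_iff.2 (Or.inl (by simpa using h)))
          · apply le_of_eq
            apply da_eq_iff.2
            simp only [ofLex_fst, ofLex_snd] at h1 h2
            rw [Bool.lt_iff] at h2
            constructor
            · rw [Subtype.ext_iff] at h1
              rw [h1]
            · rw [hb, h2.1]
    | true =>
      left
      have hx1 : ((ofLex z).1 : ℝ) ≠ 1 := by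
        intro h
        refine hz1 (da_eq_iff.2 ⟨by simpa using h, by simpa using hb⟩)
      have hxlt : ((ofLex z).1 : ℝ) < 1 := lt_of_le_of_ne ((ofLex z).1).2.2 hx1
      have hq1 : (ofLex z).1 < (ofLex q).1 := by
        rcases da_lt_iff.1 hqz with h | ⟨h1, h2⟩
        · exact h
        · rw [hb] at h2
          exact absurd h2 (by simp)
      obtain ⟨y, hy1, hy2⟩ := exists_between (show ((ofLex z).1 : ℝ) < ((ofLex q).1 : ℝ) from hq1)
      have hyI : y ∈ Set.Icc (0:ℝ) 1 := ⟨le_trans ((ofLex z).1).2.1 hy1.le,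
        le_trans hy2.le ((ofLex q).1).2.2⟩
      refine ⟨toLex (⟨y, hyI⟩, false), ⟨?_, ?_⟩, ?_, ?_⟩
      · intro h
        rcases da_eq_iff.1 h with ⟨h1, -⟩
        simp only [ofLex_fst] at h1
        have : 0 < y := lt_of_le_of_lt ((ofLex z).1).2.1 hy1
        rw [h1] at this
        exact absurd this (by norm_num)
      · intro h
        rcases da_eq_iff.1 h with ⟨-, h2⟩
        simp at h2
      · exact le_of_lt (da_lt_iff.2 (Or.inl (by exact hy2)))
      · exact da_lt_iff.2 (Or.inl (by exact hy1))

end DAhelp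

namespace DAhelp

abbrev LftP (B : Set ℝ) (φ : ℝ → ℝ) (x : ℝ) : Prop :=
  x ∈ B ∧ 0 < φ x ∧ ∀ y ∈ B, y < x → φ y < φ x

abbrev RgtP (B : Set ℝ) (φ : ℝ → ℝ) (x : ℝ) : Prop :=
  x ∈ B ∧ φ x < 1 ∧ ∀ y ∈ B, x < y → φ x < φ y

abbrev LSet (B : Set ℝ) (φ : ℝ → ℝ) : Set DoubleArrow :=
  {p | ((ofLex p).2 = false ∧ LftP B φ ((ofLex p).1 : ℝ)) ∨
       ((ofLex p).2 = true ∧ RgtP B φ ((ofLex p).1 : ℝ))}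

variable {B : Set ℝ} {φ : ℝ → ℝ}

theorem memB_of_mem_LSet {p : DoubleArrow} (hp : p ∈ LSet B φ) : ((ofLex p).1 : ℝ) ∈ B := by
  rcases hp with ⟨-, h, -, -⟩ | ⟨-, h, -, -⟩ <;> exact h

theorem lt_of_phi_lt (hmono : Monotone φ) {a b : ℝ} (h : φ a < φ b) : a < b := by
  by_contra hab
  exact absurd (hmono (not_lt.1 hab)) (not_le.2 h)

theorem left_approx (hBc : IsCompact B) (hBne : B.Nonempty)
    (key2 : ∀ x y : ℝ, x < y → Ioo x y ∩ B = ∅ → φ x = φ y)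
    (hphi0 : φ (sInf B) = 0)
    {x : ℝ} (hx : x ∈ B) (hpos : 0 < φ x)
    (hstrict : ∀ y ∈ B, y < x → φ y < φ x)
    {r : ℝ} (hr : r < x) : ∃ y ∈ B, r < y ∧ y < x := by
  by_contra hcon
  push_neg at hcon
  by_cases hC : (B ∩ Iic r).Nonempty
  · set a := sSup (B ∩ Iic r) with ha
    have hbdd : BddAbove (B ∩ Iic r) := hBc.bddAbove.mono inter_subset_left
    have haB : a ∈ B ∩ Iic r :=
      (hBc.isClosed.inter isClosed_Iic).csSup_mem hC hbdd
    have hax : a < x := lt_of_le_of_lt haB.2 hr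
    have hempty : Ioo a x ∩ B = ∅ := by
      ext y
      simp only [mem_inter_iff, mem_Ioo, mem_empty_iff_false, iff_false, not_and]
      rintro ⟨hay, hyx⟩ hyB
      rcases le_or_gt y r with h | h
      · exact absurd (le_csSup hbdd ⟨hyB, h⟩) (not_le.2 hay)
      · exact absurd (hcon y hyB h) (not_le.2 hyx)
    exact absurd (key2 a x hax hempty) (ne_of_lt (hstrict a haB.1 hax))
  · have hm : sInf B ∈ B := hBc.isClosed.csInf_mem hBne hBc.bddBelow
    have h1 : x ≤ sInf B := by
      rcases le_or_gt (sInf B) r with h | h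
      · exact absurd ⟨hm, h⟩ (fun hh => hC ⟨_, hh⟩)
      · exact hcon _ hm h
    have h2 : sInf B ≤ x := csInf_le hBc.bddBelow hx
    rw [← le_antisymm h2 h1, hphi0] at hpos
    exact lt_irrefl 0 hpos

theorem right_approx (hBc : IsCompact B) (hBne : B.Nonempty)
    (key2 : ∀ x y : ℝ, x < y → Ioo x y ∩ B = ∅ → φ x = φ y)
    (hphi1 : φ (sSup B) = 1)
    {x : ℝ} (hx : x ∈ B) (hlt : φ x < 1)
    (hstrict : ∀ y ∈ B, x < y → φ x < φ y)
    {r : ℝ} (hr : x < r) : ∃ y ∈ B, y < r ∧ x < y := by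
  by_contra hcon
  push_neg at hcon
  by_cases hC : (B ∩ Ici r).Nonempty
  · set a := sInf (B ∩ Ici r) with ha
    have hbdd : BddBelow (B ∩ Ici r) := hBc.bddBelow.mono inter_subset_left
    have haB : a ∈ B ∩ Ici r :=
      (hBc.isClosed.inter isClosed_Ici).csInf_mem hC hbdd
    have hax : x < a := lt_of_lt_of_le hr haB.2
    have hempty : Ioo x a ∩ B = ∅ := by
      ext y
      simp only [mem_inter_iff, mem_Ioo, mem_empty_iff_false, iff_false, not_and]
      rintro ⟨hxy, hya⟩ hyB
      rcases le_or_gt r y with h | h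
      · exact absurd (csInf_le hbdd ⟨hyB, h⟩) (not_le.2 hya)
      · exact absurd (hcon y hyB h) (not_le.2 hxy)
    exact absurd (key2 x a hax hempty) (ne_of_lt (hstrict a haB.1 hax))
  · have hM : sSup B ∈ B := hBc.isClosed.csSup_mem hBne hBc.bddAbove
    have h1 : sSup B ≤ x := by
      rcases le_or_gt r (sSup B) with h | h
      · exact absurd ⟨hM, h⟩ (fun hh => hC ⟨_, hh⟩)
      · exact hcon _ hM h
    have h2 : x ≤ sSup B := le_csSup hBc.bddAbove hx
    rw [← le_antisymm h1 h2, hphi1] at hlt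
    exact lt_irrefl 1 hlt

theorem fibmax (hBc : IsCompact B) (hc : Continuous φ) (hmono : Monotone φ)
    {x : ℝ} (hx : x ∈ B) :
    ∃ y ∈ B, φ y = φ x ∧ x ≤ y ∧ ∀ z ∈ B, y < z → φ y < φ z := by
  set F := B ∩ φ ⁻¹' {φ x} with hF
  have hFc : IsClosed F := hBc.isClosed.inter (isClosed_singleton.preimage hc)
  have hFne : F.Nonempty := ⟨x, hx, rfl⟩
  have hFbdd : BddAbove F := hBc.bddAbove.mono inter_subset_left
  have hy := hFc.csSup_mem hFne hFbdd
  refine ⟨sSup F, hy.1, hy.2, le_csSup hFbdd ⟨hx, rfl⟩, ?_⟩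
  intro z hz hyz
  rcases lt_or_eq_of_le (hmono hyz.le) with h | h
  · exact h
  · have hzF : z ∈ F := ⟨hz, by rw [mem_preimage, mem_singleton_iff, ← h, hy.2]⟩
    exact absurd (le_csSup hFbdd hzF) (not_le.2 hyz)

theorem fibmin (hBc : IsCompact B) (hc : Continuous φ) (hmono : Monotone φ)
    {x : ℝ} (hx : x ∈ B) :
    ∃ y ∈ B, φ y = φ x ∧ y ≤ x ∧ ∀ z ∈ B, z < y → φ z < φ y := by
  set F := B ∩ φ ⁻¹' {φ x} with hF
  have hFc : IsClosed F := hBc.isClosed.inter (isClosed_singleton.preimage hc)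
  have hFne : F.Nonempty := ⟨x, hx, rfl⟩
  have hFbdd : BddBelow F := hBc.bddBelow.mono inter_subset_left
  have hy := hFc.csInf_mem hFne hFbdd
  refine ⟨sInf F, hy.1, hy.2, csInf_le hFbdd ⟨hx, rfl⟩, ?_⟩
  intro z hz hyz
  rcases lt_or_eq_of_le (hmono hyz.le) with h | h
  · exact h
  · have hzF : z ∈ F := ⟨hz, by rw [mem_preimage, mem_singleton_iff, h, hy.2]⟩
    exact absurd (csInf_le hFbdd hzF) (not_le.2 hyz)

end DAhelp

namespace DAhelp

variable {B : Set ℝ} {φ : ℝ → ℝ}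

theorem L_low (hBI : B ⊆ Set.Icc 0 1) (hBc : IsCompact B) (hBne : B.Nonempty)
    (hmono : Monotone φ) (hc : Continuous φ)
    (key1 : ∀ x y : ℝ, x < y → (Ioo x y ∩ B).Nonempty → φ x < φ y)
    (key2 : ∀ x y : ℝ, x < y → Ioo x y ∩ B = ∅ → φ x = φ y)
    (hphi0 : φ (sInf B) = 0)
    (hrange : ∀ x : ℝ, 0 ≤ φ x ∧ φ x ≤ 1) :
    ∀ z, z ∈ LSet B φ → ∀ q, q < z →
      (∃ w, w ∈ LSet B φ ∧ q ≤ w ∧ w < z) ∨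
      (∃ w, w ∈ LSet B φ ∧ w < z ∧ ∀ v, v ∈ LSet B φ → w < v → z ≤ v) ∨
      (∀ v, v ∈ LSet B φ → z ≤ v) := by
  rintro z hz q hqz
  rcases hz with ⟨hb, hxB, hxpos, hstrict⟩ | ⟨hb, hxB, hxlt, hstrict⟩
  · -- left copy (b = false): z is a limit from below
    left
    have hq1 : ((ofLex q).1 : ℝ) < ((ofLex z).1 : ℝ) := by
      rcases da_lt_iff.1 hqz with h | ⟨h1, h2⟩
      · exact_mod_cast h
      · rw [hb] at h2
        exact absurd (Bool.lt_iff.1 h2).2 (by simp)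
    obtain ⟨y0, hy0B, hy0r, hy0x⟩ := left_approx hBc hBne key2 hphi0 hxB hxpos hstrict hq1
    obtain ⟨y, hyB, hyphi, hy0y, hystrict⟩ := fibmax hBc hc hmono hy0B
    have hyltx : φ y < φ ((ofLex z).1 : ℝ) := by
      rw [hyphi]; exact hstrict y0 hy0B hy0x
    have hyx : y < ((ofLex z).1 : ℝ) := lt_of_phi_lt hmono hyltx
    refine ⟨toLex (⟨y, hBI hyB⟩, true), Or.inr ⟨rfl, hyB, ?_, ?_⟩, ?_, ?_⟩
    · exact lt_of_lt_of_le hyltx (hrange _).2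
    · exact hystrict
    · exact le_of_lt (da_lt_iff.2 (Or.inl (by exact_mod_cast lt_of_lt_of_le hy0r hy0y)))
    · exact da_lt_iff.2 (Or.inl (by exact_mod_cast hyx))
  · -- right copy (b = true)
    by_cases hLft : LftP B φ ((ofLex z).1 : ℝ)
    · -- predecessor (x, false)
      right; left
      refine ⟨toLex ((ofLex z).1, false), Or.inl ⟨rfl, hLft⟩, ?_, ?_⟩
      · exact da_lt_iff.2 (Or.inr ⟨rfl, by simp only [ofLex_snd, hb]; decide⟩)
      · rintro v hv hwv
        rcases da_lt_iff.1 hwv with h | ⟨h1, h2⟩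
        · exact le_of_lt (da_lt_iff.2 (Or.inl h))
        · refine le_of_eq (da_eq_iff.2 ⟨?_, ?_⟩).symm
          · exact (Subtype.ext_iff.1 h1).symm
          · rw [hb, (Bool.lt_iff.1 h2).2]
    · by_cases hpos : 0 < φ ((ofLex z).1 : ℝ)
      · -- predecessor is the left twin of the gap partner
        have hexists : ∃ y ∈ B, y < ((ofLex z).1 : ℝ) ∧ φ y = φ ((ofLex z).1 : ℝ) := by
          by_contra hcon
          push_neg at hcon
          exact hLft ⟨hxB, hpos,
            fun y hy hyx => lt_of_le_of_ne (hmono hyx.le) (hcon y hy hyx)⟩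
        obtain ⟨y, hyB, hyx, hyphi⟩ := hexists
        have hLfty : LftP B φ y := by
          refine ⟨hyB, by rw [hyphi]; exact hpos, ?_⟩
          intro y' hy' hy'y
          rcases lt_or_eq_of_le (hmono hy'y.le) with h | h
          · exact h
          · exfalso
            have hk : φ y' < φ ((ofLex z).1 : ℝ) :=
              key1 y' _ (lt_trans hy'y hyx) ⟨y, ⟨hy'y, hyx⟩, hyB⟩
            rw [h, hyphi] at hk
            exact lt_irrefl _ hk
        right; left
        refine ⟨toLex (⟨y, hBI hyB⟩, false), Or.inl ⟨rfl, hLfty⟩, ?_, ?_⟩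
        · exact da_lt_iff.2 (Or.inl (by exact_mod_cast hyx))
        · rintro v hv hwv
          by_contra hvz
          have hvz' := not_le.1 hvz
          rcases da_lt_iff.1 hvz' with h | ⟨h1, h2⟩
          · rcases da_lt_iff.1 hwv with h' | ⟨h1', h2'⟩
            · have hv1B := memB_of_mem_LSet hv
              have hk : φ y < φ ((ofLex z).1 : ℝ) :=
                key1 y _ (lt_trans (by exact_mod_cast h') (by exact_mod_cast h))
                  ⟨((ofLex v).1 : ℝ), ⟨by exact_mod_cast h', by exact_mod_cast h⟩, hv1B⟩
              rw [hyphi] at hk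
              exact lt_irrefl _ hk
            · have hv2 : (ofLex v).2 = true := (Bool.lt_iff.1 h2').2
              rcases hv with ⟨hbv, -⟩ | ⟨-, hvB, -, hvstrict⟩
              · rw [hv2] at hbv; exact Bool.noConfusion hbv
              · have hyv1 : ((ofLex v).1 : ℝ) = y := (Subtype.ext_iff.1 h1').symm
                have hk := hvstrict _ hxB (by rw [hyv1]; exact hyx)
                rw [hyv1, hyphi] at hk
                exact lt_irrefl _ hk
          · have hv2 : (ofLex v).2 = false := by
              rw [hb] at h2
              exact (Bool.lt_iff.1 h2).1
            rcases hv with ⟨-, hvl⟩ | ⟨hbv, -⟩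
            · apply hLft
              have he : ((ofLex v).1 : ℝ) = ((ofLex z).1 : ℝ) := Subtype.ext_iff.1 h1
              rwa [he] at hvl
            · rw [hv2] at hbv; exact Bool.noConfusion hbv
      · -- z is the minimum
        have hphix : φ ((ofLex z).1 : ℝ) = 0 := le_antisymm (not_lt.1 hpos) (hrange _).1
        right; right
        intro v hv
        by_contra hvz
        have hvz' := not_le.1 hvz
        rcases da_lt_iff.1 hvz' with h | ⟨h1, h2⟩
        · have hv1B := memB_of_mem_LSet hv
          have hle : φ ((ofLex v).1 : ℝ) ≤ 0 := by
            have hmm := hmono (le_of_lt (show ((ofLex v).1 : ℝ) < ((ofLex z).1 : ℝ) by exact_mod_cast h))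
            rwa [hphix] at hmm
          have heq : φ ((ofLex v).1 : ℝ) = 0 := le_antisymm hle (hrange _).1
          rcases hv with ⟨-, -, hpos', -⟩ | ⟨-, -, -, hstrict'⟩
          · rw [heq] at hpos'; exact lt_irrefl 0 hpos'
          · have hk := hstrict' _ hxB (by exact_mod_cast h)
            rw [heq, hphix] at hk
            exact lt_irrefl 0 hk
        · have hv2 : (ofLex v).2 = false := by
            rw [hb] at h2; exact (Bool.lt_iff.1 h2).1
          rcases hv with ⟨-, -, hpos', -⟩ | ⟨hbv, -⟩
          · have he : ((ofLex v).1 : ℝ) = ((ofLex z).1 : ℝ) := Subtype.ext_iff.1 h1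
            rw [he, hphix] at hpos'
            exact lt_irrefl 0 hpos'
          · rw [hv2] at hbv; exact Bool.noConfusion hbv

theorem L_high (hBI : B ⊆ Set.Icc 0 1) (hBc : IsCompact B) (hBne : B.Nonempty)
    (hmono : Monotone φ) (hc : Continuous φ)
    (key1 : ∀ x y : ℝ, x < y → (Ioo x y ∩ B).Nonempty → φ x < φ y)
    (key2 : ∀ x y : ℝ, x < y → Ioo x y ∩ B = ∅ → φ x = φ y)
    (hphi1 : φ (sSup B) = 1)
    (hrange : ∀ x : ℝ, 0 ≤ φ x ∧ φ x ≤ 1) :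
    ∀ z, z ∈ LSet B φ → ∀ q, z < q →
      (∃ w, w ∈ LSet B φ ∧ w ≤ q ∧ z < w) ∨
      (∃ w, w ∈ LSet B φ ∧ z < w ∧ ∀ v, v ∈ LSet B φ → v < w → v ≤ z) ∨
      (∀ v, v ∈ LSet B φ → v ≤ z) := by
  rintro z hz q hqz
  rcases hz with ⟨hb, hxB, hxpos, hstrict⟩ | ⟨hb, hxB, hxlt, hstrict⟩
  · -- left copy (b = false)
    by_cases hRgt : RgtP B φ ((ofLex z).1 : ℝ)
    · -- successor (x, true)
      right; left
      refine ⟨toLex ((ofLex z).1, true), Or.inr ⟨rfl, hRgt⟩, ?_, ?_⟩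
      · exact da_lt_iff.2 (Or.inr ⟨rfl, by simp only [ofLex_snd, hb]; decide⟩)
      · rintro v hv hwv
        rcases da_lt_iff.1 hwv with h | ⟨h1, h2⟩
        · exact le_of_lt (da_lt_iff.2 (Or.inl h))
        · refine le_of_eq (da_eq_iff.2 ⟨?_, ?_⟩)
          · exact Subtype.ext_iff.1 h1
          · rw [hb, (Bool.lt_iff.1 h2).1]
    · by_cases hlt1 : φ ((ofLex z).1 : ℝ) < 1
      · have hexists : ∃ y ∈ B, ((ofLex z).1 : ℝ) < y ∧ φ y = φ ((ofLex z).1 : ℝ) := by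
          by_contra hcon
          push_neg at hcon
          exact hRgt ⟨hxB, hlt1,
            fun y hy hxy => lt_of_le_of_ne (hmono hxy.le) (fun he => (hcon y hy hxy) he.symm)⟩
        obtain ⟨y, hyB, hxy, hyphi⟩ := hexists
        have hRgty : RgtP B φ y := by
          refine ⟨hyB, by rw [hyphi]; exact hlt1, ?_⟩
          intro y' hy' hyy'
          rcases lt_or_eq_of_le (hmono hyy'.le) with h | h
          · exact h
          · exfalso
            have hk : φ ((ofLex z).1 : ℝ) < φ y' :=
              key1 _ y' (lt_trans hxy hyy') ⟨y, ⟨hxy, hyy'⟩, hyB⟩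
            rw [← h, hyphi] at hk
            exact lt_irrefl _ hk
        right; left
        refine ⟨toLex (⟨y, hBI hyB⟩, true), Or.inr ⟨rfl, hRgty⟩, ?_, ?_⟩
        · exact da_lt_iff.2 (Or.inl (by exact_mod_cast hxy))
        · rintro v hv hwv
          by_contra hvz
          have hvz' := not_le.1 hvz
          rcases da_lt_iff.1 hvz' with h | ⟨h1, h2⟩
          · rcases da_lt_iff.1 hwv with h' | ⟨h1', h2'⟩
            · have hv1B := memB_of_mem_LSet hv
              have hk : φ ((ofLex z).1 : ℝ) < φ y :=
                key1 _ y (lt_trans (by exact_mod_cast h) (by exact_mod_cast h'))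
                  ⟨((ofLex v).1 : ℝ), ⟨by exact_mod_cast h, by exact_mod_cast h'⟩, hv1B⟩
              rw [hyphi] at hk
              exact lt_irrefl _ hk
            · have hv2 : (ofLex v).2 = false := (Bool.lt_iff.1 h2').1
              rcases hv with ⟨-, hvB, -, hvstrict⟩ | ⟨hbv, -⟩
              · have hyv1 : ((ofLex v).1 : ℝ) = y := Subtype.ext_iff.1 h1'
                have hk := hvstrict _ hxB (by rw [hyv1]; exact hxy)
                rw [hyv1, hyphi] at hk
                exact lt_irrefl _ hk
              · rw [hv2] at hbv; exact Bool.noConfusion hbv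
          · have hv2 : (ofLex v).2 = true := by
              rw [hb] at h2
              exact (Bool.lt_iff.1 h2).2
            rcases hv with ⟨hbv, -⟩ | ⟨-, hvr⟩
            · rw [hv2] at hbv; exact Bool.noConfusion hbv
            · apply hRgt
              have he : ((ofLex v).1 : ℝ) = ((ofLex z).1 : ℝ) := (Subtype.ext_iff.1 h1).symm
              rwa [he] at hvr
      · -- z is the maximum
        have hphix : φ ((ofLex z).1 : ℝ) = 1 := le_antisymm (hrange _).2 (not_lt.1 hlt1)
        right; right
        intro v hv
        by_contra hvz
        have hvz' := not_le.1 hvz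
        rcases da_lt_iff.1 hvz' with h | ⟨h1, h2⟩
        · have hv1B := memB_of_mem_LSet hv
          have hge : 1 ≤ φ ((ofLex v).1 : ℝ) := by
            have hmm := hmono (le_of_lt (show ((ofLex z).1 : ℝ) < ((ofLex v).1 : ℝ) by exact_mod_cast h))
            rwa [hphix] at hmm
          have heq : φ ((ofLex v).1 : ℝ) = 1 := le_antisymm (hrange _).2 hge
          rcases hv with ⟨-, -, -, hstrict'⟩ | ⟨-, -, hlt', -⟩
          · have hk := hstrict' _ hxB (by exact_mod_cast h)
            rw [heq, hphix] at hk
            exact lt_irrefl 1 hk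
          · rw [heq] at hlt'; exact lt_irrefl 1 hlt'
        · have hv2 : (ofLex v).2 = true := by
            rw [hb] at h2; exact (Bool.lt_iff.1 h2).2
          rcases hv with ⟨hbv, -⟩ | ⟨-, -, hlt', -⟩
          · rw [hv2] at hbv; exact Bool.noConfusion hbv
          · have he : ((ofLex v).1 : ℝ) = ((ofLex z).1 : ℝ) := (Subtype.ext_iff.1 h1).symm
            rw [he, hphix] at hlt'
            exact lt_irrefl 1 hlt'
  · -- right copy (b = true): limit from above
    left
    have hq1 : ((ofLex z).1 : ℝ) < ((ofLex q).1 : ℝ) := by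
      rcases da_lt_iff.1 hqz with h | ⟨h1, h2⟩
      · exact_mod_cast h
      · rw [hb] at h2
        exact absurd (Bool.lt_iff.1 h2).1 (by simp)
    obtain ⟨y0, hy0B, hy0r, hy0x⟩ := right_approx hBc hBne key2 hphi1 hxB hxlt hstrict hq1
    obtain ⟨y, hyB, hyphi, hyy0, hystrict⟩ := fibmin hBc hc hmono hy0B
    have hxlty : φ ((ofLex z).1 : ℝ) < φ y := by
      rw [hyphi]; exact hstrict y0 hy0B hy0x
    have hxy : ((ofLex z).1 : ℝ) < y := lt_of_phi_lt hmono hxlty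
    refine ⟨toLex (⟨y, hBI hyB⟩, false), Or.inl ⟨rfl, hyB, ?_, ?_⟩, ?_, ?_⟩
    · exact lt_of_le_of_lt (hrange _).1 hxlty
    · exact hystrict
    · exact le_of_lt (da_lt_iff.2 (Or.inl (by exact_mod_cast lt_of_le_of_lt hyy0 hy0r)))
    · exact da_lt_iff.2 (Or.inl (by exact_mod_cast hxy))

end DAhelp

namespace DAhelp

variable {B : Set ℝ} {φ : ℝ → ℝ}

def Fmap (hrange : ∀ x : ℝ, 0 ≤ φ x ∧ φ x ≤ 1) (z : ↥(LSet B φ)) : SplitInterval :=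
  ⟨toLex (⟨φ ((ofLex z.val).1 : ℝ), (hrange _).1, (hrange _).2⟩, (ofLex z.val).2), by
    constructor
    · intro h
      rcases da_eq_iff.1 h with ⟨h1, h2⟩
      have h1' : φ ((ofLex z.val).1 : ℝ) = 0 := h1
      have h2' : (ofLex z.val).2 = false := h2
      rcases z.2 with ⟨-, -, hpos, -⟩ | ⟨hb, -⟩
      · rw [h1'] at hpos
        exact lt_irrefl 0 hpos
      · rw [h2'] at hb
        exact Bool.noConfusion hb
    · intro h
      rcases da_eq_iff.1 h with ⟨h1, h2⟩
      have h1' : φ ((ofLex z.val).1 : ℝ) = 1 := h1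
      have h2' : (ofLex z.val).2 = true := h2
      rcases z.2 with ⟨hb, -⟩ | ⟨-, -, hlt, -⟩
      · rw [h2'] at hb
        exact Bool.noConfusion hb
      · rw [h1'] at hlt
        exact lt_irrefl 1 hlt⟩

theorem Fmap_strictMono (hrange : ∀ x : ℝ, 0 ≤ φ x ∧ φ x ≤ 1) (hmono : Monotone φ)
    (key1 : ∀ x y : ℝ, x < y → (Ioo x y ∩ B).Nonempty → φ x < φ y)
    (key2 : ∀ x y : ℝ, x < y → Ioo x y ∩ B = ∅ → φ x = φ y) :
    StrictMono (Fmap (B := B) hrange) := by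
  intro z1 z2 h12
  have hval : z1.val < z2.val := h12
  rcases da_lt_iff.1 hval with h | ⟨h1, h2⟩
  · have hx12 : ((ofLex z1.val).1 : ℝ) < ((ofLex z2.val).1 : ℝ) := by exact_mod_cast h
    by_cases hgap : (Ioo ((ofLex z1.val).1 : ℝ) ((ofLex z2.val).1 : ℝ) ∩ B).Nonempty
    · exact Subtype.mk_lt_mk.2 (da_lt_iff.2 (Or.inl
        (Subtype.mk_lt_mk.2 (key1 _ _ hx12 hgap))))
    · have hphi12 : φ ((ofLex z1.val).1 : ℝ) = φ ((ofLex z2.val).1 : ℝ) :=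
        key2 _ _ hx12 (not_nonempty_iff_eq_empty.1 hgap)
      have hb1 : (ofLex z1.val).2 = false := by
        rcases z1.2 with ⟨hb, -⟩ | ⟨hb, -, -, hstrict⟩
        · exact hb
        · exfalso
          have hk := hstrict _ (memB_of_mem_LSet z2.2) hx12
          rw [hphi12] at hk
          exact lt_irrefl _ hk
      have hb2 : (ofLex z2.val).2 = true := by
        rcases z2.2 with ⟨hb, -, -, hstrict⟩ | ⟨hb, -⟩
        · exfalso
          have hk := hstrict _ (memB_of_mem_LSet z1.2) hx12
          rw [hphi12] at hk
          exact lt_irrefl _ hk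
        · exact hb
      refine Subtype.mk_lt_mk.2 (da_lt_iff.2 (Or.inr ⟨?_, ?_⟩))
      · exact Subtype.ext hphi12
      · show ((ofLex z1.val).2 : Bool) < (ofLex z2.val).2
        rw [hb1, hb2]
        decide
  · have hx12 : ((ofLex z1.val).1 : ℝ) = ((ofLex z2.val).1 : ℝ) := Subtype.ext_iff.1 h1
    refine Subtype.mk_lt_mk.2 (da_lt_iff.2 (Or.inr ⟨?_, ?_⟩))
    · exact Subtype.ext (show φ ((ofLex z1.val).1 : ℝ) = φ ((ofLex z2.val).1 : ℝ) by rw [hx12])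
    · exact h2

theorem Fmap_surj (hBI : B ⊆ Set.Icc 0 1) (hBc : IsCompact B)
    (hc : Continuous φ) (hmono : Monotone φ)
    (hsurj : ∀ t ∈ Set.Icc (0:ℝ) 1, ∃ x ∈ B, φ x = t)
    (hrange : ∀ x : ℝ, 0 ≤ φ x ∧ φ x ≤ 1) :
    Function.Surjective (Fmap (B := B) hrange) := by
  rintro ⟨p, hp0, hp1⟩
  have ht : ((ofLex p).1 : ℝ) ∈ Set.Icc (0:ℝ) 1 := (ofLex p).1.2
  obtain ⟨x0, hx0B, hx0t⟩ := hsurj _ ht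
  cases hbp : (ofLex p).2 with
  | false =>
    have ht0 : ((ofLex p).1 : ℝ) ≠ 0 := by
      intro h
      exact hp0 (da_eq_iff.2 ⟨by simpa using h, by simpa using hbp⟩)
    obtain ⟨x, hxB, hxphi, -, hxstrict⟩ := fibmin hBc hc hmono hx0B
    have hphix : φ x = ((ofLex p).1 : ℝ) := by rw [hxphi, hx0t]
    refine ⟨⟨toLex (⟨x, hBI hxB⟩, false), Or.inl ⟨rfl, hxB, ?_, ?_⟩⟩, ?_⟩
    · show 0 < φ x
      rw [hphix]
      exact lt_of_le_of_ne ht.1 (Ne.symm ht0)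
    · exact hxstrict
    · apply Subtype.ext
      apply da_eq_iff.2
      exact ⟨hphix, hbp.symm⟩
  | true =>
    have ht1 : ((ofLex p).1 : ℝ) ≠ 1 := by
      intro h
      exact hp1 (da_eq_iff.2 ⟨by simpa using h, by simpa using hbp⟩)
    obtain ⟨x, hxB, hxphi, -, hxstrict⟩ := fibmax hBc hc hmono hx0B
    have hphix : φ x = ((ofLex p).1 : ℝ) := by rw [hxphi, hx0t]
    refine ⟨⟨toLex (⟨x, hBI hxB⟩, true), Or.inr ⟨rfl, hxB, ?_, ?_⟩⟩, ?_⟩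
    · show φ x < 1
      rw [hphix]
      exact lt_of_le_of_ne ht.2 ht1
    · exact hxstrict
    · apply Subtype.ext
      apply da_eq_iff.2
      exact ⟨hphix, hbp.symm⟩

theorem abstract_main (hBI : B ⊆ Set.Icc 0 1) (hBc : IsCompact B) (hBne : B.Nonempty)
    (hmono : Monotone φ) (hc : Continuous φ)
    (key1 : ∀ x y : ℝ, x < y → (Ioo x y ∩ B).Nonempty → φ x < φ y)
    (key2 : ∀ x y : ℝ, x < y → Ioo x y ∩ B = ∅ → φ x = φ y)
    (hsurj : ∀ t ∈ Set.Icc (0:ℝ) 1, ∃ x ∈ B, φ x = t)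
    (hphi0 : φ (sInf B) = 0) (hphi1 : φ (sSup B) = 1)
    (hrange : ∀ x : ℝ, 0 ≤ φ x ∧ φ x ≤ 1) :
    Nonempty (SplitInterval ≃ₜ ↥(LSet B φ)) := by
  haveI h1 : OrderTopology SplitInterval := splitInterval_orderTopology
  haveI h2 : OrderTopology ↥(LSet B φ) :=
    orderTopology_subtype_of (fun p => p ∈ LSet B φ)
      (L_low hBI hBc hBne hmono hc key1 key2 hphi0 hrange)
      (L_high hBI hBc hBne hmono hc key1 key2 hphi1 hrange)
  exact ⟨((Fmap_strictMono hrange hmono key1 key2).orderIsoOfSurjective _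
    (Fmap_surj hBI hBc hc hmono hsurj hrange)).symm.toHomeomorph⟩

end DAhelp

/-- For every perfect (closed, nonempty, without isolated points) subset `A` of `[0,1]`,
the subspace `A × {0,1}` of the split interval contains a homeomorphic copy of the split
interval `S'`. -/
theorem perfect_split_contains_split_interval (A : Set ℝ) (hA : A ⊆ Set.Icc 0 1)
    (hperf : Perfect A) (hne : A.Nonempty) :
    ∃ L : Set DoubleArrow, L ⊆ {p : DoubleArrow | ((ofLex p).1 : ℝ) ∈ A} ∧
      Nonempty (SplitInterval ≃ₜ ↥L) := by
  obtain ⟨B, ν, hBA, hBc, hBne, hprob, hatom, hopen, hnull⟩ := exists_nice_measure hperf hne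
  haveI := hprob
  have hBI : B ⊆ Set.Icc 0 1 := fun x hx => hA (hBA hx)
  refine ⟨DAhelp.LSet B (phi ν), ?_, ?_⟩
  · intro p hp
    exact hBA (DAhelp.memB_of_mem_LSet hp)
  · exact DAhelp.abstract_main hBI hBc hBne phi_mono (phi_cont hatom)
      (fun x y h h2 => phi_lt hopen h h2)
      (fun x y h h2 => phi_eq hatom hnull h h2)
      (fun t ht => phi_surj hBc hBne hatom hnull ht)
      (phi_sInf hBc hBne hatom hnull) (phi_sSup hBc hBne hnull)
      (fun x => ⟨phi_nonneg x, phi_le_one x⟩)
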